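/- Let α > −1 be a real number, N ≥ 1, and let 0 = z_0 < z_1 < … < z_N be real numbers. Then det_{i,j=1}^N [ ∫_{z_{i−1}}^{z_i} y^{j−1+α} dy ] = (∏_{k=1}^N z_k^{α+1}) Δ_N(z) / (α+1)_N. -/

import Mathlib

open MeasureTheory Real

noncomputable section

/-- The non-negative closed Weyl chamber `W_≥^N`. -/
def Wge (N : ℕ) : Set (Fin N → ℝ) :=
  {x | (∀ i j : Fin N, i ≤ j → x i ≤ x j) ∧ ∀ i, 0 ≤ x i}

/-- The strictly positive open Weyl chamber `Ẇ_≥^N`. -/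
def WgeOpen (N : ℕ) : Set (Fin N → ℝ) :=
  {x | (∀ i j : Fin N, i < j → x i < x j) ∧ ∀ i, 0 < x i}

/-- The Vandermonde determinant `Δ_N`. -/
def vdm {N : ℕ} (y : Fin N → ℝ) : ℝ :=
  ∏ p ∈ Finset.univ.filter fun p : Fin N × Fin N => p.1 < p.2, (y p.2 - y p.1)

/-- Pochhammer symbol `(a)_N = a (a+1) ⋯ (a+N-1)`. -/
def poch (a : ℝ) (N : ℕ) : ℝ := ∏ k ∈ Finset.range N, (a + k)

/-- The interlacing set `W_≥^{N,N}(z) = {y : 0 ≤ y₁ ≤ z₁ ≤ y₂ ≤ … ≤ y_N ≤ z_N}`. -/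
def interNN {N : ℕ} (z : Fin N → ℝ) : Set (Fin N → ℝ) :=
  {y | (∀ i, 0 ≤ y i) ∧ (∀ i, y i ≤ z i) ∧
    ∀ i : Fin N, ∀ h : (i : ℕ) + 1 < N, z i ≤ y ⟨(i : ℕ) + 1, h⟩}

/-- Density of the kernel `Λ_{α,N}^N(z, dy)` with respect to Lebesgue measure. -/
def lamNNdens (α : ℝ) {N : ℕ} (z y : Fin N → ℝ) : ℝ :=
  poch (α + 1) N * (∏ k, y k ^ α / z k ^ (α + 1)) * (vdm y / vdm z) *
    Set.indicator (interNN z) (fun _ => (1 : ℝ)) y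

/-- The `k`-th factor in the density of `Λ_{α,N}^{N+1}(x, dy)`
(with the conventions `x₀ = 0` and `y_{N+1} = +∞`). -/
def lamNp1factor (α : ℝ) {N : ℕ} (x : Fin (N + 1) → ℝ) (y : Fin N → ℝ) (i : Fin N) : ℝ :=
  Set.indicator
      (Set.Icc (if (i : ℕ) = 0 then 0 else x ⟨(i : ℕ) - 1, by have := i.isLt; omega⟩)
        (x i.succ)) (fun _ => (1 : ℝ)) (y i) *
    ∫ z in Set.Ioc (max (x i.castSucc) (y i))
        (if h : (i : ℕ) + 1 < N then min (x i.succ) (y ⟨(i : ℕ) + 1, h⟩) else x i.succ),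
      y i ^ α / z ^ (α + 1)

/-- Density of the kernel `Λ_{α,N}^{N+1}(x, dy)` with respect to Lebesgue measure. -/
def lamNp1dens (α : ℝ) {N : ℕ} (x : Fin (N + 1) → ℝ) (y : Fin N → ℝ) : ℝ :=
  (N.factorial : ℝ) * poch (α + 1) N * (vdm y / vdm x) * ∏ i, lamNp1factor α x y i

/-- The interlacing set `W_N^{N+1}(x) = {z : x₁ ≤ z₁ ≤ x₂ ≤ … ≤ z_N ≤ x_{N+1}}`. -/
def interGT {N : ℕ} (x : Fin (N + 1) → ℝ) : Set (Fin N → ℝ) :=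
  {z | ∀ i : Fin N, x i.castSucc ≤ z i ∧ z i ≤ x i.succ}

/-- Density of the kernel `Λ_N^{N+1}(x, dz)` with respect to Lebesgue measure. -/
def lamGTdens {N : ℕ} (x : Fin (N + 1) → ℝ) (z : Fin N → ℝ) : ℝ :=
  (N.factorial : ℝ) * (vdm z / vdm x) * Set.indicator (interGT x) (fun _ => (1 : ℝ)) z


lemma vdm_eq {N : ℕ} (y : Fin N → ℝ) :
    vdm y = ∏ i : Fin N, ∏ j ∈ Finset.Ioi i, (y j - y i) := by
  rw [vdm]
  exact Finset.prod_finset_product' (f := fun c a => y a - y c)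
    (Finset.univ.filter fun p : Fin N × Fin N => p.1 < p.2) Finset.univ
    (fun i => Finset.Ioi i) (fun p => by simp)


/-- For `α > -1` and `0 = z₀ < z₁ < … < z_N`,
`det[∫_{z_{i-1}}^{z_i} y^{j-1+α} dy] = (∏ z_k^{α+1}) Δ_N(z) / (α+1)_N`. -/
theorem stmt1 {N : ℕ} (hN : 1 ≤ N) (α : ℝ) (hα : -1 < α) (z : Fin (N + 1) → ℝ)
    (hz0 : z 0 = 0) (hz : StrictMono z) :
    Matrix.det (Matrix.of fun i j : Fin N =>
        ∫ y in (z i.castSucc)..(z i.succ), y ^ (((j : ℕ) : ℝ) + α)) =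
      (∏ k : Fin N, z k.succ ^ (α + 1)) * vdm (fun k : Fin N => z k.succ) /
        poch (α + 1) N := by
  set w : Fin N → ℝ := fun k => z k.succ with hw
  have hwpos : ∀ k, 0 < w k := fun k => hz0 ▸ hz (Fin.succ_pos k)
  have he : ∀ j : Fin N, (0 : ℝ) < ((j : ℕ) : ℝ) + α + 1 := by
    intro j
    have : (0:ℝ) ≤ ((j:ℕ):ℝ) := Nat.cast_nonneg _
    linarith
  set M' : Matrix (Fin N) (Fin N) ℝ :=
    Matrix.of fun i j => w i ^ (((j : ℕ) : ℝ) + α + 1) / (((j : ℕ) : ℝ) + α + 1) with hM'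
  set A : Matrix (Fin N) (Fin N) ℝ :=
    Matrix.of fun i k => if i = k then 1 else if (k : ℕ) + 1 = (i : ℕ) then -1 else 0 with hA
  have key : (Matrix.of fun i j : Fin N =>
      ∫ y in (z i.castSucc)..(z i.succ), y ^ (((j : ℕ) : ℝ) + α)) = A * M' := by
    ext i j
    have hint : (∫ y in (z i.castSucc)..(z i.succ), y ^ (((j : ℕ) : ℝ) + α)) =
        (z i.succ ^ (((j:ℕ):ℝ) + α + 1) - z i.castSucc ^ (((j:ℕ):ℝ) + α + 1)) /
          (((j:ℕ):ℝ) + α + 1) := by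
      rw [integral_rpow (Or.inl (by have := he j; linarith))]
    have hsplit : ∀ k : Fin N, A i k * M' k j =
        (if k = i then M' k j else 0) +
        (if (k : ℕ) + 1 = (i : ℕ) then -(M' k j) else 0) := by
      intro k
      simp only [hA, Matrix.of_apply]
      by_cases h1 : i = k
      · subst h1
        simp
      · have h1' : ¬ k = i := fun h => h1 h.symm
        by_cases h2 : (k : ℕ) + 1 = (i : ℕ) <;> simp [h1, h1', h2]
    rw [Matrix.mul_apply]
    simp only [hsplit, Finset.sum_add_distrib, Finset.sum_ite_eq' Finset.univ i,
      Finset.mem_univ, if_true]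
    by_cases hi : (i : ℕ) = 0
    · have hc : i.castSucc = 0 := by ext; simpa using hi
      have hz' : ∀ k : Fin N, ¬ ((k : ℕ) + 1 = (i : ℕ)) := fun k h => by omega
      simp only [hz', if_false, Finset.sum_const_zero, add_zero]
      rw [Matrix.of_apply, hint, hc, hz0, Real.zero_rpow (ne_of_gt (he j))]
      simp [hM']
      rfl
    · set i' : Fin N := ⟨(i : ℕ) - 1, by omega⟩ with hi'
      have hcond : ∀ k : Fin N, ((k : ℕ) + 1 = (i : ℕ)) ↔ k = i' := by
        intro k
        constructor
        · intro h; ext; simp [hi']; omega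
        · intro h; subst h; simp [hi']; omega
      have : (∑ k : Fin N, if (k : ℕ) + 1 = (i : ℕ) then -(M' k j) else 0) = -(M' i' j) := by
        rw [Finset.sum_congr rfl fun k _ => by rw [if_congr (hcond k) rfl rfl]]
        simp
      rw [this]
      have hcs : z i.castSucc = w i' := by
        simp only [hw]
        congr 1
        ext
        simp [hi']
        omega
      rw [Matrix.of_apply, hint, hcs]
      simp only [hM', Matrix.of_apply]
      ring
  rw [key, Matrix.det_mul]
  have hdetA : A.det = 1 := by
    rw [Matrix.det_of_lowerTriangular A]
    · simp only [hA, Matrix.of_apply, if_pos rfl]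
      simp
    · intro i k h
      simp only [OrderDual.toDual_lt_toDual] at h
      have h1 : ¬ i = k := ne_of_lt h
      have h2 : ¬ ((k : ℕ) + 1 = (i : ℕ)) := by
        have := Fin.lt_iff_val_lt_val.mp h; omega
      simp [hA, h1, h2]
  rw [hdetA, one_mul]
  have hMdec : M' = Matrix.of fun i j : Fin N =>
      ((((j:ℕ):ℝ) + α + 1)⁻¹) *
        (Matrix.of (fun i j : Fin N => w i ^ (α+1) * Matrix.vandermonde w i j) i j) := by
    ext i j
    simp only [hM', Matrix.of_apply, Matrix.vandermonde_apply]
    rw [show (((j:ℕ):ℝ) + α + 1) = (α + 1) + ((j:ℕ):ℝ) by ring,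
      Real.rpow_add (hwpos i), Real.rpow_natCast]
    field_simp
  rw [hMdec, Matrix.det_mul_row]
  have : Matrix.det (Matrix.of fun i j => w i ^ (α+1) * Matrix.vandermonde w i j) =
      (∏ i, w i ^ (α+1)) * (Matrix.vandermonde w).det := Matrix.det_mul_column _ _
  rw [this, Matrix.det_vandermonde, ← vdm_eq]
  have hpoch : poch (α + 1) N = ∏ j : Fin N, (((j:ℕ):ℝ) + α + 1) := by
    rw [poch, ← Fin.prod_univ_eq_prod_range]
    exact Finset.prod_congr rfl fun k _ => by push_cast; ring
  rw [hpoch, div_eq_mul_inv, ← Finset.prod_inv_distrib]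
  ring

end
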